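/- Let X and Y be independent random variables, X exponentially distributed with mean λ_sr > 0 and Y exponentially distributed with mean λ_rd > 0. Then, as b̂ → ∞, the asymptotic average symbol error rate of BDPSK, P̄_BDPSK = (1/2)·E[ exp( −b̂·X²·Y ) ], is asymptotically equivalent to π / ( 4·λ_sr·√( b̂·λ_rd ) ), and the asymptotic average symbol error rate of noncoherent BFSK, P̄_BFSK = (1/2)·E[ exp( −(1/2)·b̂·X²·Y ) ], is asymptotically equivalent to π·√2 / ( 4·λ_sr·√( b̂·λ_rd ) ). -/

import Mathlib

open MeasureTheory ProbabilityTheory Real Filter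

section AuxAser
open Set
open scoped ENNReal NNReal



lemma expPDFReal_eq {r : ℝ} (x : ℝ) :
    exponentialPDFReal r x = if 0 ≤ x then r * Real.exp (-(r * x)) else 0 := by
  rw [exponentialPDFReal, gammaPDFReal]
  simp only [rpow_one, Real.Gamma_one, div_one, sub_self, rpow_zero, mul_one]

lemma integral_expMeasure_eq {r : ℝ} (hr : 0 < r) (g : ℝ → ℝ) :
    ∫ x, g x ∂(expMeasure r) = ∫ x in Ioi (0:ℝ), r * Real.exp (-(r * x)) * g x := by
  have hm : expMeasure r
      = volume.withDensity (fun x => ((exponentialPDFReal r x).toNNReal : ℝ≥0∞)) := rfl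
  rw [hm, integral_withDensity_eq_integral_smul
    (measurable_exponentialPDFReal r).real_toNNReal g]
  have : ∀ x : ℝ, (exponentialPDFReal r x).toNNReal • g x
      = Set.indicator (Ici (0:ℝ)) (fun x => r * Real.exp (-(r * x)) * g x) x := by
    intro x
    rw [NNReal.smul_def, Real.coe_toNNReal _ (exponentialPDFReal_nonneg hr x),
      expPDFReal_eq]
    by_cases hx : (0:ℝ) ≤ x
    · simp [Set.indicator, hx, smul_eq_mul]
    · simp [Set.indicator, hx, smul_eq_mul]
  simp_rw [this]
  rw [integral_indicator measurableSet_Ici, integral_Ici_eq_integral_Ioi]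

lemma integral_exp_neg_mul_Ioi {b : ℝ} (hb : 0 < b) :
    ∫ x in Ioi (0:ℝ), Real.exp (-(b * x)) = b⁻¹ := by
  have := integral_comp_mul_left_Ioi (fun t => Real.exp (-t)) 0 hb
  simp only [mul_zero, integral_exp_neg_Ioi_zero, smul_eq_mul, mul_one] at this
  exact this

lemma integral_exp_expMeasure {r : ℝ} (hr : 0 < r) {a : ℝ} (ha : 0 ≤ a) :
    ∫ y, Real.exp (-(a * y)) ∂(expMeasure r) = r / (r + a) := by
  rw [integral_expMeasure_eq hr]
  have h1 : ∀ y : ℝ, r * Real.exp (-(r * y)) * Real.exp (-(a * y))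
      = r * Real.exp (-((r + a) * y)) := by
    intro y
    rw [mul_assoc, ← Real.exp_add]
    ring_nf
  simp_rw [h1]
  rw [integral_const_mul, integral_exp_neg_mul_Ioi (by linarith : 0 < r + a)]
  field_simp

lemma expMeasure_Iio_zero {r : ℝ} : expMeasure r (Iio 0) = 0 := by
  have hm : expMeasure r = volume.withDensity (exponentialPDF r) := rfl
  rw [hm, withDensity_apply _ measurableSet_Iio]
  exact lintegral_exponentialPDF_of_nonpos le_rfl

lemma expectation_eq {Ω : Type*} [MeasurableSpace Ω] (P : Measure Ω) [IsProbabilityMeasure P]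
    (X Y : Ω → ℝ) (hX : Measurable X) (hY : Measurable Y) (hXY : IndepFun X Y P)
    {lsr lrd : ℝ} (hlsr : 0 < lsr) (hlrd : 0 < lrd)
    (hXd : Measure.map X P = expMeasure lsr⁻¹) (hYd : Measure.map Y P = expMeasure lrd⁻¹)
    {s : ℝ} (hs : 0 ≤ s) :
    ∫ ω, Real.exp (-(s * X ω ^ 2 * Y ω)) ∂P
      = ∫ x, (1 + lrd * (s * x ^ 2))⁻¹ ∂(expMeasure lsr⁻¹) := by
  haveI h1 : IsProbabilityMeasure (expMeasure lsr⁻¹) :=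
    isProbabilityMeasure_expMeasure (inv_pos.mpr hlsr)
  haveI h2 : IsProbabilityMeasure (expMeasure lrd⁻¹) :=
    isProbabilityMeasure_expMeasure (inv_pos.mpr hlrd)
  have hmap : P.map (fun ω => (X ω, Y ω)) = (expMeasure lsr⁻¹).prod (expMeasure lrd⁻¹) := by
    rw [← hXd, ← hYd]
    exact (indepFun_iff_map_prod_eq_prod_map_map hX.aemeasurable hY.aemeasurable).mp hXY
  have hcont : Continuous fun p : ℝ × ℝ => Real.exp (-(s * p.1 ^ 2 * p.2)) := by fun_prop
  have hmeas : AEStronglyMeasurable (fun p : ℝ × ℝ => Real.exp (-(s * p.1 ^ 2 * p.2)))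
      ((expMeasure lsr⁻¹).prod (expMeasure lrd⁻¹)) := hcont.aestronglyMeasurable
  have haeY : ∀ᵐ p ∂((expMeasure lsr⁻¹).prod (expMeasure lrd⁻¹)), 0 ≤ p.2 := by
    rw [ae_iff]
    have hset : {p : ℝ × ℝ | ¬ 0 ≤ p.2} = (univ : Set ℝ) ×ˢ Iio 0 := by
      ext p; simp [not_le]
    rw [hset, Measure.prod_prod, expMeasure_Iio_zero, mul_zero]
  have hint : Integrable (fun p : ℝ × ℝ => Real.exp (-(s * p.1 ^ 2 * p.2)))
      ((expMeasure lsr⁻¹).prod (expMeasure lrd⁻¹)) := by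
    apply Integrable.mono' (integrable_const 1) hmeas
    filter_upwards [haeY] with p hp
    rw [Real.norm_eq_abs, abs_of_pos (Real.exp_pos _)]
    rw [Real.exp_le_one_iff, neg_nonpos]
    exact mul_nonneg (mul_nonneg hs (sq_nonneg _)) hp
  calc ∫ ω, Real.exp (-(s * X ω ^ 2 * Y ω)) ∂P
      = ∫ p, Real.exp (-(s * p.1 ^ 2 * p.2)) ∂(P.map (fun ω => (X ω, Y ω))) := by
        rw [integral_map (hX.prodMk hY).aemeasurable]
        rw [← hmap] at hmeas
        exact hmeas
    _ = ∫ p, Real.exp (-(s * p.1 ^ 2 * p.2)) ∂((expMeasure lsr⁻¹).prod (expMeasure lrd⁻¹)) := by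
        rw [hmap]
    _ = ∫ x, ∫ y, Real.exp (-(s * x ^ 2 * y)) ∂(expMeasure lrd⁻¹) ∂(expMeasure lsr⁻¹) :=
        integral_prod _ hint
    _ = ∫ x, (1 + lrd * (s * x ^ 2))⁻¹ ∂(expMeasure lsr⁻¹) := by
        apply integral_congr_ae
        apply Filter.Eventually.of_forall
        intro x
        have ha : (0:ℝ) ≤ s * x ^ 2 := mul_nonneg hs (sq_nonneg _)
        beta_reduce
        rw [integral_exp_expMeasure (inv_pos.mpr hlrd) ha]
        have hpos : (0:ℝ) < lrd⁻¹ + s * x ^ 2 := by positivity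
        have hpos2 : (0:ℝ) < 1 + lrd * (s * x ^ 2) := by positivity
        field_simp

lemma key_dct {lsr lrd : ℝ} (hlsr : 0 < lsr) (hlrd : 0 < lrd) :
    Tendsto (fun s : ℝ => ∫ u in Ioi (0:ℝ),
        lsr⁻¹ * Real.exp (-(lsr⁻¹ * (u / Real.sqrt (s * lrd)))) * (1 + u ^ 2)⁻¹)
      atTop (nhds (lsr⁻¹ * (π / 2))) := by
  have hlim : (∫ u in Ioi (0:ℝ), lsr⁻¹ * (1 + u ^ 2)⁻¹) = lsr⁻¹ * (π / 2) := by
    rw [MeasureTheory.integral_const_mul, integral_Ioi_inv_one_add_sq, Real.arctan_zero, sub_zero]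
  rw [← hlim]
  apply tendsto_integral_filter_of_dominated_convergence
    (fun u : ℝ => lsr⁻¹ * (1 + u ^ 2)⁻¹)
  · apply Eventually.of_forall; intro s
    apply Continuous.aestronglyMeasurable
    have h1 : Continuous fun u : ℝ => (1 + u ^ 2)⁻¹ :=
      Continuous.inv₀ (by fun_prop) (fun x => by positivity)
    exact (continuous_const.mul ((Real.continuous_exp.comp
      ((continuous_const.mul (continuous_id.div_const _)).neg)))).mul h1
  · apply Eventually.of_forall; intro s
    rw [ae_restrict_iff' measurableSet_Ioi]
    apply Eventually.of_forall; intro u hu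
    have hu0 : (0:ℝ) < u := hu
    have h1 : (0:ℝ) < 1 + u ^ 2 := by positivity
    rw [Real.norm_eq_abs, abs_of_nonneg (by positivity)]
    have hexp : Real.exp (-(lsr⁻¹ * (u / Real.sqrt (s * lrd)))) ≤ 1 := by
      rw [Real.exp_le_one_iff, neg_nonpos]
      have : (0:ℝ) ≤ u / Real.sqrt (s * lrd) := div_nonneg hu0.le (Real.sqrt_nonneg _)
      positivity
    calc lsr⁻¹ * Real.exp (-(lsr⁻¹ * (u / Real.sqrt (s * lrd)))) * (1 + u ^ 2)⁻¹
        ≤ lsr⁻¹ * 1 * (1 + u ^ 2)⁻¹ := by gcongr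
      _ = lsr⁻¹ * (1 + u ^ 2)⁻¹ := by rw [mul_one]
  · exact (integrable_inv_one_add_sq.const_mul lsr⁻¹).restrict
  · apply Eventually.of_forall; intro u
    have hsqt : Tendsto Real.sqrt atTop atTop := by
      apply tendsto_atTop_atTop.mpr
      intro b
      refine ⟨max (b ^ 2) 0, fun a ha => ?_⟩
      calc b ≤ |b| := le_abs_self b
        _ = Real.sqrt (b ^ 2) := (Real.sqrt_sq_eq_abs b).symm
        _ ≤ Real.sqrt a := Real.sqrt_le_sqrt (le_trans (le_max_left _ _) ha)
    have hsq : Tendsto (fun s : ℝ => Real.sqrt (s * lrd)) atTop atTop :=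
      hsqt.comp (Tendsto.atTop_mul_const hlrd tendsto_id)
    have hdiv : Tendsto (fun s : ℝ => u / Real.sqrt (s * lrd)) atTop (nhds 0) := by
      simp only [div_eq_mul_inv]
      have := (hsq.inv_tendsto_atTop).const_mul u
      simpa using this
    have hexp : Tendsto (fun s : ℝ => Real.exp (-(lsr⁻¹ * (u / Real.sqrt (s * lrd)))))
        atTop (nhds 1) := by
      have h0 : Tendsto (fun s : ℝ => -(lsr⁻¹ * (u / Real.sqrt (s * lrd)))) atTop (nhds 0) := by
        simpa using (hdiv.const_mul lsr⁻¹).neg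
      have := (Real.continuous_exp.tendsto 0).comp h0
      simpa [Function.comp_def] using this
    have := (hexp.const_mul lsr⁻¹).mul_const ((1 + u ^ 2)⁻¹)
    simpa using this


lemma subst_eq {lsr lrd : ℝ} (hlsr : 0 < lsr) (hlrd : 0 < lrd) {s : ℝ} (hs : 0 < s) :
    Real.sqrt (s * lrd) * ∫ x, (1 + lrd * (s * x ^ 2))⁻¹ ∂(expMeasure lsr⁻¹)
      = ∫ u in Ioi (0:ℝ),
          lsr⁻¹ * Real.exp (-(lsr⁻¹ * (u / Real.sqrt (s * lrd)))) * (1 + u ^ 2)⁻¹ := by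
  set c := Real.sqrt (s * lrd) with hcdef
  have hc : 0 < c := Real.sqrt_pos.mpr (by positivity)
  rw [integral_expMeasure_eq (inv_pos.mpr hlsr)]
  have hsub := integral_comp_mul_left_Ioi
    (fun u => lsr⁻¹ * Real.exp (-(lsr⁻¹ * (u / c))) * (1 + u ^ 2)⁻¹) 0 hc
  simp only [mul_zero, smul_eq_mul] at hsub
  have heq : ∀ x : ℝ, lsr⁻¹ * Real.exp (-(lsr⁻¹ * x)) * (1 + lrd * (s * x ^ 2))⁻¹
      = lsr⁻¹ * Real.exp (-(lsr⁻¹ * (c * x / c))) * (1 + (c * x) ^ 2)⁻¹ := by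
    intro x
    rw [mul_div_cancel_left₀ _ hc.ne', mul_pow, hcdef, Real.sq_sqrt (by positivity)]
    ring_nf
  simp_rw [heq]
  rw [hsub]
  field_simp

lemma key_tendsto {Ω : Type*} [MeasurableSpace Ω] (P : Measure Ω) [IsProbabilityMeasure P]
    (X Y : Ω → ℝ) (hX : Measurable X) (hY : Measurable Y) (hXY : IndepFun X Y P)
    {lsr lrd : ℝ} (hlsr : 0 < lsr) (hlrd : 0 < lrd)
    (hXd : Measure.map X P = expMeasure lsr⁻¹) (hYd : Measure.map Y P = expMeasure lrd⁻¹) :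
    Tendsto (fun s : ℝ => Real.sqrt (s * lrd) * ∫ ω, Real.exp (-(s * X ω ^ 2 * Y ω)) ∂P)
      atTop (nhds (lsr⁻¹ * (π / 2))) := by
  apply (key_dct hlsr hlrd).congr'
  filter_upwards [eventually_gt_atTop (0:ℝ)] with s hs
  rw [expectation_eq P X Y hX hY hXY hlsr hlrd hXd hYd hs.le, subst_eq hlsr hlrd hs]

end AuxAser

/-- For independent exponential `X` (mean `λ_sr`) and `Y` (mean `λ_rd`), as
`b̂ → ∞`, the asymptotic ASER of BDPSK, `P̄_BDPSK = (1/2)·E[exp(−b̂·X²·Y)]`, is asymptotically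
equivalent to `π/(4·λ_sr·√(b̂·λ_rd))`, and the asymptotic ASER of noncoherent BFSK,
`P̄_BFSK = (1/2)·E[exp(−(1/2)·b̂·X²·Y)]`, is asymptotically equivalent to
`π·√2/(4·λ_sr·√(b̂·λ_rd))`. -/
theorem asymptotic_aser_bdpsk_bfsk
    {Ω : Type*} [MeasurableSpace Ω] (P : Measure Ω) [IsProbabilityMeasure P]
    (X Y : Ω → ℝ) (hX : Measurable X) (hY : Measurable Y)
    (hXY : IndepFun X Y P)
    (lsr lrd : ℝ) (hlsr : 0 < lsr) (hlrd : 0 < lrd)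
    (hXd : Measure.map X P = expMeasure lsr⁻¹)
    (hYd : Measure.map Y P = expMeasure lrd⁻¹) :
    Tendsto (fun b : ℝ =>
        ((1 / 2) * ∫ ω, Real.exp (-(b * X ω ^ 2 * Y ω)) ∂P) /
          (π / (4 * lsr * Real.sqrt (b * lrd))))
      atTop (nhds 1) ∧
    Tendsto (fun b : ℝ =>
        ((1 / 2) * ∫ ω, Real.exp (-((1 / 2) * b * X ω ^ 2 * Y ω)) ∂P) /
          (π * Real.sqrt 2 / (4 * lsr * Real.sqrt (b * lrd))))
      atTop (nhds 1) := by
  have key := key_tendsto P X Y hX hY hXY hlsr hlrd hXd hYd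
  have hπ : (π : ℝ) ≠ 0 := Real.pi_ne_zero
  constructor
  · have h2 : Tendsto (fun s : ℝ => (2 * lsr / π) *
        (Real.sqrt (s * lrd) * ∫ ω, Real.exp (-(s * X ω ^ 2 * Y ω)) ∂P)) atTop (nhds 1) := by
      have := key.const_mul (2 * lsr / π)
      convert this using 2
      field_simp
    apply h2.congr'
    filter_upwards [eventually_gt_atTop (0:ℝ)] with b hb
    have hsq : 0 < Real.sqrt (b * lrd) := Real.sqrt_pos.mpr (by positivity)
    field_simp
    ring
  · have hhalf : Tendsto (fun b : ℝ => 1 / 2 * b) atTop atTop := by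
      apply Tendsto.const_mul_atTop (by norm_num) tendsto_id
    have key2 := key.comp hhalf
    have h2 : Tendsto (fun b : ℝ => (2 * lsr / π) *
        (Real.sqrt (1 / 2 * b * lrd) * ∫ ω, Real.exp (-(1 / 2 * b * X ω ^ 2 * Y ω)) ∂P))
        atTop (nhds 1) := by
      have := key2.const_mul (2 * lsr / π)
      have e : (2 * lsr / π * (lsr⁻¹ * (π / 2))) = 1 := by field_simp
      rw [e] at this
      exact this
    apply h2.congr'
    filter_upwards [eventually_gt_atTop (0:ℝ)] with b hb
    have hsq : 0 < Real.sqrt (1 / 2 * b * lrd) := Real.sqrt_pos.mpr (by positivity)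
    have hs2 : (0:ℝ) < Real.sqrt 2 := Real.sqrt_pos.mpr (by norm_num)
    have hbl : Real.sqrt (b * lrd) = Real.sqrt 2 * Real.sqrt (1 / 2 * b * lrd) := by
      rw [← Real.sqrt_mul (by norm_num : (0:ℝ) ≤ 2)]
      ring_nf
    rw [hbl]
    field_simp
    ring
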